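/- Let a, b, c, d be pairwise distinct vertices. The rigid triangle, i.e. the hypergraph with vertex set {a,b,c,d} and hyperedges {a,b,c}, {b,c,d}, {a,d}, has no segment representation. Likewise, for a fifth distinct vertex f, the hypergraph with vertex set {a,b,c,d,f} and hyperedges {a,b,c}, {b,c,d}, {a,d,f} has no segment representation. -/

import Mathlib

set_option maxRecDepth 8000

abbrev Pt : Type := ℝ × ℝ

def IsLine (L : Set Pt) : Prop :=
  ∃ a b : Pt, a ≠ b ∧ L = (affineSpan ℝ {a, b} : Set Pt)

def IsSegment (S : Set Pt) : Prop :=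
  ∃ a b : Pt, a ≠ b ∧ S = segment ℝ a b

structure HGraph (ι : Type) where
  V : Finset ι
  E : Finset (Finset ι)
  edge_nonempty : ∀ e ∈ E, e.Nonempty
  edge_subset : ∀ e ∈ E, e ⊆ V

structure LineRep {ι : Type} (H : HGraph ι) where
  α : ι → Pt
  β : Finset ι → Set Pt
  α_inj : Set.InjOn α ↑H.V
  β_inj : Set.InjOn β ↑H.E
  β_isLine : ∀ e ∈ H.E, IsLine (β e)
  incidence : ∀ v ∈ H.V, ∀ e ∈ H.E, (v ∈ e ↔ α v ∈ β e)

structure SegmentRep {ι : Type} (H : HGraph ι) where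
  α : ι → Pt
  β : Finset ι → Set Pt
  α_inj : Set.InjOn α ↑H.V
  β_inj : Set.InjOn β ↑H.E
  β_isSegment : ∀ e ∈ H.E, IsSegment (β e)
  incidence : ∀ v ∈ H.V, ∀ e ∈ H.E, (v ∈ e ↔ α v ∈ β e)

def SegmentRep.Strict {ι : Type} {H : HGraph ι} (R : SegmentRep H) : Prop :=
  ∀ e ∈ H.E, ∀ e' ∈ H.E, e ≠ e' → (R.β e ∩ R.β e').Subsingleton

def LineRep.CrossingFree {ι : Type} {H : HGraph ι} (R : LineRep H) : Prop :=
  ∀ e ∈ H.E, ∀ e' ∈ H.E, ((R.β e ∩ R.β e').Nonempty ↔ ∃ v, v ∈ e ∧ v ∈ e')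

def SegmentRep.CrossingFree {ι : Type} {H : HGraph ι} (R : SegmentRep H) : Prop :=
  ∀ e ∈ H.E, ∀ e' ∈ H.E, ((R.β e ∩ R.β e').Nonempty ↔ ∃ v, v ∈ e ∧ v ∈ e')

open AffineMap

lemma param_aux {p q B C x : Pt} (hB : B ∈ segment ℝ p q) (hC : C ∈ segment ℝ p q)
    (hx : x ∈ segment ℝ p q) (hBC : B ≠ C) : ∃ u : ℝ, x = lineMap B C u := by
  rw [segment_eq_image'] at hB hC hx
  obtain ⟨tB, _, rfl⟩ := hB
  obtain ⟨tC, _, rfl⟩ := hC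
  obtain ⟨tx, _, rfl⟩ := hx
  have hne : tC - tB ≠ 0 := by
    intro h
    have : tC = tB := by linarith
    exact hBC (by rw [this])
  refine ⟨(tx - tB) / (tC - tB), ?_⟩
  rw [lineMap_apply]
  simp only [vsub_eq_sub, vadd_eq_add]
  have h1 : (p + tC • (q - p)) - (p + tB • (q - p)) = (tC - tB) • (q - p) := by
    rw [sub_smul]; abel
  rw [h1, smul_smul, div_mul_cancel₀ _ hne, sub_smul]
  abel

lemma conv_aux {S : Set Pt} (hS : Convex ℝ S) {B C : Pt} {u w t : ℝ}
    (hu : lineMap B C u ∈ S) (hw : lineMap B C w ∈ S) (ht : t ∈ Set.uIcc u w) :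
    lineMap B C t ∈ S := by
  have ht' : t ∈ segment ℝ u w := by rwa [segment_eq_uIcc]
  have himg : lineMap B C t ∈ (lineMap B C : ℝ →ᵃ[ℝ] Pt) '' segment ℝ u w :=
    ⟨t, ht', rfl⟩
  rw [image_segment] at himg
  exact hS.segment_subset hu hw himg

lemma core {A B C D : Pt} {S1 S2 S3 : Set Pt}
    (h1 : IsSegment S1) (h2 : IsSegment S2)
    (c3 : Convex ℝ S3) (hBC : B ≠ C)
    (hA1 : A ∈ S1) (hB1 : B ∈ S1) (hC1 : C ∈ S1)
    (hB2 : B ∈ S2) (hC2 : C ∈ S2) (hD2 : D ∈ S2)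
    (hA3 : A ∈ S3) (hD3 : D ∈ S3)
    (hA2 : A ∉ S2) (hD1 : D ∉ S1) : B ∈ S3 := by
  obtain ⟨p, q, hpq, rfl⟩ := h1
  obtain ⟨r, s, hrs, rfl⟩ := h2
  have c1 : Convex ℝ (segment ℝ p q) := convex_segment p q
  have c2 : Convex ℝ (segment ℝ r s) := convex_segment r s
  obtain ⟨uA, hA⟩ := param_aux hB1 hC1 hA1 hBC
  obtain ⟨uD, hD⟩ := param_aux hB2 hC2 hD2 hBC
  have hB0 : B = lineMap B C (0 : ℝ) := by simp
  have hC1' : C = lineMap B C (1 : ℝ) := by simp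
  rw [hA] at hA1 hA3 hA2
  rw [hD] at hD2 hD3 hD1
  rw [hB0] at hB1 hB2
  rw [hC1'] at hC1 hC2
  have key : (0 : ℝ) ∈ Set.uIcc uA uD := by
    by_contra hmem
    rw [Set.mem_uIcc] at hmem
    push_neg at hmem
    obtain ⟨hm1, hm2⟩ := hmem
    have hsign : (0 < uA ∧ 0 < uD) ∨ (uA < 0 ∧ uD < 0) := by
      rcases le_or_gt uA 0 with h' | h'
      · have h2' := hm1 h'
        exact Or.inr ⟨hm2 h2'.le, h2'⟩
      · rcases le_or_gt uD 0 with h'' | h''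
        · exact absurd (hm2 h'') (not_lt.mpr h'.le)
        · exact Or.inl ⟨h', h''⟩
    rcases hsign with ⟨ha, hd⟩ | ⟨ha, hd⟩
    · rcases le_total uA uD with hle | hle
      · exact hA2 (conv_aux c2 hB2 hD2 (by rw [Set.mem_uIcc]; left; exact ⟨ha.le, hle⟩))
      · exact hD1 (conv_aux c1 hB1 hA1 (by rw [Set.mem_uIcc]; left; exact ⟨hd.le, hle⟩))
    · rcases le_total uA uD with hle | hle
      · exact hD1 (conv_aux c1 hA1 hC1 (by rw [Set.mem_uIcc]; left; exact ⟨hle, by linarith⟩))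
      · exact hA2 (conv_aux c2 hD2 hC2 (by rw [Set.mem_uIcc]; left; exact ⟨hle, by linarith⟩))
  rw [hB0]
  exact conv_aux c3 hA3 hD3 key

theorem stmt8 {ι : Type} [DecidableEq ι] :
    (∀ a b c d : ι, [a, b, c, d].Pairwise (· ≠ ·) →
      ∀ H : HGraph ι, H.V = {a, b, c, d} →
        H.E = {({a, b, c} : Finset ι), {b, c, d}, {a, d}} →
        ¬ Nonempty (SegmentRep H)) ∧
    (∀ a b c d f : ι, [a, b, c, d, f].Pairwise (· ≠ ·) →
      ∀ H : HGraph ι, H.V = {a, b, c, d, f} →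
        H.E = {({a, b, c} : Finset ι), {b, c, d}, {a, d, f}} →
        ¬ Nonempty (SegmentRep H)) := by
  constructor
  · intro a b c d hpair H hV hE hne
    obtain ⟨R⟩ := hne
    simp only [List.pairwise_cons, List.mem_cons, List.not_mem_nil, or_false,
      List.mem_singleton, forall_eq_or_imp, forall_eq] at hpair
    obtain ⟨⟨hab, hac, had⟩, ⟨hbc, hbd⟩, hcd, -⟩ := hpair
    have he1 : ({a, b, c} : Finset ι) ∈ H.E := by rw [hE]; simp
    have he2 : ({b, c, d} : Finset ι) ∈ H.E := by rw [hE]; simp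
    have he3 : ({a, d} : Finset ι) ∈ H.E := by rw [hE]; simp
    have hva : a ∈ H.V := by rw [hV]; simp
    have hvb : b ∈ H.V := by rw [hV]; simp
    have hvc : c ∈ H.V := by rw [hV]; simp
    have hvd : d ∈ H.V := by rw [hV]; simp
    have hαbc : R.α b ≠ R.α c := fun h =>
      hbc (R.α_inj (Finset.mem_coe.mpr hvb) (Finset.mem_coe.mpr hvc) h)
    have c3 : Convex ℝ (R.β {a, d}) := by
      obtain ⟨x, y, -, hxy⟩ := R.β_isSegment _ he3
      rw [hxy]; exact convex_segment x y
    have hA1 : R.α a ∈ R.β {a, b, c} := (R.incidence a hva _ he1).mp (by simp)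
    have hB1 : R.α b ∈ R.β {a, b, c} := (R.incidence b hvb _ he1).mp (by simp)
    have hC1 : R.α c ∈ R.β {a, b, c} := (R.incidence c hvc _ he1).mp (by simp)
    have hB2 : R.α b ∈ R.β {b, c, d} := (R.incidence b hvb _ he2).mp (by simp)
    have hC2 : R.α c ∈ R.β {b, c, d} := (R.incidence c hvc _ he2).mp (by simp)
    have hD2 : R.α d ∈ R.β {b, c, d} := (R.incidence d hvd _ he2).mp (by simp)
    have hA3 : R.α a ∈ R.β {a, d} := (R.incidence a hva _ he3).mp (by simp)
    have hD3 : R.α d ∈ R.β {a, d} := (R.incidence d hvd _ he3).mp (by simp)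
    have hA2 : R.α a ∉ R.β {b, c, d} := by
      intro h
      have h' := (R.incidence a hva _ he2).mpr h
      simp only [Finset.mem_insert, Finset.mem_singleton] at h'
      rcases h' with h' | h' | h'
      exacts [hab h', hac h', had h']
    have hD1 : R.α d ∉ R.β {a, b, c} := by
      intro h
      have h' := (R.incidence d hvd _ he1).mpr h
      simp only [Finset.mem_insert, Finset.mem_singleton] at h'
      rcases h' with h' | h' | h'
      exacts [had h'.symm, hbd h'.symm, hcd h'.symm]
    have hB3 : R.α b ∈ R.β {a, d} :=
      core (R.β_isSegment _ he1) (R.β_isSegment _ he2) c3 hαbc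
        hA1 hB1 hC1 hB2 hC2 hD2 hA3 hD3 hA2 hD1
    have h' := (R.incidence b hvb _ he3).mpr hB3
    simp only [Finset.mem_insert, Finset.mem_singleton] at h'
    rcases h' with h' | h'
    exacts [hab h'.symm, hbd h']
  · intro a b c d f hpair H hV hE hne
    obtain ⟨R⟩ := hne
    simp only [List.pairwise_cons, List.mem_cons, List.not_mem_nil, or_false,
      List.mem_singleton, forall_eq_or_imp, forall_eq] at hpair
    obtain ⟨⟨hab, hac, had, haf⟩, ⟨hbc, hbd, hbf⟩, ⟨hcd, hcf⟩, hdf, -⟩ := hpair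
    have he1 : ({a, b, c} : Finset ι) ∈ H.E := by rw [hE]; simp
    have he2 : ({b, c, d} : Finset ι) ∈ H.E := by rw [hE]; simp
    have he3 : ({a, d, f} : Finset ι) ∈ H.E := by rw [hE]; simp
    have hva : a ∈ H.V := by rw [hV]; simp
    have hvb : b ∈ H.V := by rw [hV]; simp
    have hvc : c ∈ H.V := by rw [hV]; simp
    have hvd : d ∈ H.V := by rw [hV]; simp
    have hαbc : R.α b ≠ R.α c := fun h =>
      hbc (R.α_inj (Finset.mem_coe.mpr hvb) (Finset.mem_coe.mpr hvc) h)
    have c3 : Convex ℝ (R.β {a, d, f}) := by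
      obtain ⟨x, y, -, hxy⟩ := R.β_isSegment _ he3
      rw [hxy]; exact convex_segment x y
    have hA1 : R.α a ∈ R.β {a, b, c} := (R.incidence a hva _ he1).mp (by simp)
    have hB1 : R.α b ∈ R.β {a, b, c} := (R.incidence b hvb _ he1).mp (by simp)
    have hC1 : R.α c ∈ R.β {a, b, c} := (R.incidence c hvc _ he1).mp (by simp)
    have hB2 : R.α b ∈ R.β {b, c, d} := (R.incidence b hvb _ he2).mp (by simp)
    have hC2 : R.α c ∈ R.β {b, c, d} := (R.incidence c hvc _ he2).mp (by simp)
    have hD2 : R.α d ∈ R.β {b, c, d} := (R.incidence d hvd _ he2).mp (by simp)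
    have hA3 : R.α a ∈ R.β {a, d, f} := (R.incidence a hva _ he3).mp (by simp)
    have hD3 : R.α d ∈ R.β {a, d, f} := (R.incidence d hvd _ he3).mp (by simp)
    have hA2 : R.α a ∉ R.β {b, c, d} := by
      intro h
      have h' := (R.incidence a hva _ he2).mpr h
      simp only [Finset.mem_insert, Finset.mem_singleton] at h'
      rcases h' with h' | h' | h'
      exacts [hab h', hac h', had h']
    have hD1 : R.α d ∉ R.β {a, b, c} := by
      intro h
      have h' := (R.incidence d hvd _ he1).mpr h
      simp only [Finset.mem_insert, Finset.mem_singleton] at h'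
      rcases h' with h' | h' | h'
      exacts [had h'.symm, hbd h'.symm, hcd h'.symm]
    have hB3 : R.α b ∈ R.β {a, d, f} :=
      core (R.β_isSegment _ he1) (R.β_isSegment _ he2) c3 hαbc
        hA1 hB1 hC1 hB2 hC2 hD2 hA3 hD3 hA2 hD1
    have h' := (R.incidence b hvb _ he3).mpr hB3
    simp only [Finset.mem_insert, Finset.mem_singleton] at h'
    rcases h' with h' | h' | h'
    exacts [hab h'.symm, hbd h', hbf h']
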